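/- Let a > 0 and let z be a real random variable whose distribution is atomless and satisfies P(z ≤ −x) ≤ 1/(2 + a·x) for all x ≥ 0. Then for every c ≥ 0, E(|z + c| − |z|) ≥ c − (2/a)·log(1 + (a/2)·c). -/

import Mathlib

open MeasureTheory

/-- **Logarithmic lower bound for the expected absolute deviation.**
If `z` is atomless with `P(z ≤ -x) ≤ 1/(2 + a x)` for all `x ≥ 0`, then for every
`c ≥ 0`, `E(|z + c| - |z|) ≥ c - (2/a) log(1 + (a/2) c)`. -/
theorem expected_abs_dev_log_bound
    {Ω : Type*} [MeasurableSpace Ω] (μ : Measure Ω) [IsProbabilityMeasure μ]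
    (a : ℝ) (ha : 0 < a)
    (z : Ω → ℝ) (hz : Measurable z)
    (hatom : ∀ x : ℝ, μ {ω | z ω = x} = 0)
    (htail : ∀ x : ℝ, 0 ≤ x → (μ {ω | z ω ≤ -x}).toReal ≤ 1 / (2 + a * x))
    (c : ℝ) (hc : 0 ≤ c) :
    c - (2 / a) * Real.log (1 + (a / 2) * c) ≤ ∫ ω, (|z ω + c| - |z ω|) ∂μ := by
  set f : Ω → ℝ := fun ω => min (max (-z ω) 0) c with hf
  have hfm : Measurable f := (hz.neg.max measurable_const).min measurable_const
  have hfb : ∀ ω, 0 ≤ f ω ∧ f ω ≤ c := by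
    intro ω
    constructor
    · exact le_min (le_max_right _ _) hc
    · exact min_le_right _ _
  have hfi : Integrable f μ := by
    refine Integrable.mono' (integrable_const c) hfm.aestronglyMeasurable ?_
    filter_upwards with ω
    rw [Real.norm_eq_abs, abs_of_nonneg (hfb ω).1]
    exact (hfb ω).2
  have hkey : ∀ ω, |z ω + c| - |z ω| = c - 2 * f ω := by
    intro ω
    rcases abs_cases (z ω) with ⟨h1, h2⟩ | ⟨h1, h2⟩ <;>
      rcases abs_cases (z ω + c) with ⟨h3, h4⟩ | ⟨h3, h4⟩ <;>
      simp only [hf, min_def, max_def] <;> split_ifs <;> linarith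
  -- layer cake
  have hlayer : ∫ ω, f ω ∂μ = ∫ t in Set.Ioi 0, (μ {ω | t < f ω}).toReal := by
    exact hfi.integral_eq_integral_meas_lt (Filter.Eventually.of_forall fun ω => (hfb ω).1)
  set g : ℝ → ℝ := fun t => (μ {ω | t < f ω}).toReal with hg
  have hganti : Antitone g := fun s t hst =>
    ENNReal.toReal_mono (measure_ne_top μ _)
      (measure_mono fun ω h => lt_of_le_of_lt hst h)
  have hgm : Measurable g := hganti.measurable
  have hg01 : ∀ t, 0 ≤ g t ∧ g t ≤ 1 := by
    intro t
    refine ⟨ENNReal.toReal_nonneg, ?_⟩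
    rw [show (1 : ℝ) = (1 : ENNReal).toReal by simp]
    exact ENNReal.toReal_mono (by simp) (prob_le_one)
  -- g vanishes past c
  have hgzero : ∀ t, c ≤ t → g t = 0 := by
    intro t ht
    have : {ω | t < f ω} = ∅ := by
      ext ω
      simp only [Set.mem_setOf_eq, Set.mem_empty_iff_false, iff_false, not_lt]
      exact le_trans (hfb ω).2 ht
    simp [hg, this]
  -- split Ioi 0
  have hsplit : ∫ t in Set.Ioi 0, g t = ∫ t in Set.Ioc 0 c, g t := by
    have hU : Set.Ioi (0:ℝ) = Set.Ioc 0 c ∪ Set.Ioi c := (Set.Ioc_union_Ioi_eq_Ioi hc).symm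
    rw [hU, setIntegral_union (Set.Ioc_disjoint_Ioi le_rfl) measurableSet_Ioi]
    · have : ∫ t in Set.Ioi c, g t = 0 := by
        apply setIntegral_eq_zero_of_forall_eq_zero
        intro t ht
        exact hgzero t (le_of_lt ht)
      rw [this, add_zero]
    · refine Integrable.mono' (integrable_const 1) hgm.aestronglyMeasurable ?_
      · filter_upwards with t
        rw [Real.norm_eq_abs, abs_of_nonneg (hg01 t).1]
        exact (hg01 t).2
    · refine (integrable_zero _ _ _).congr ?_
      filter_upwards [ae_restrict_mem measurableSet_Ioi] with t ht
      exact (hgzero t ht.le).symm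
  -- bound on Ioc 0 c
  have hbound : ∫ t in Set.Ioc 0 c, g t ≤ ∫ t in Set.Ioc 0 c, 1 / (2 + a * t) := by
    apply setIntegral_mono_on
    · refine Integrable.mono' (integrable_const 1) hgm.aestronglyMeasurable ?_
      filter_upwards with t
      rw [Real.norm_eq_abs, abs_of_nonneg (hg01 t).1]
      exact (hg01 t).2
    · refine (ContinuousOn.integrableOn_Icc (f := fun t => 1 / (2 + a * t))
        (μ := volume) ?_).mono_set Set.Ioc_subset_Icc_self
      intro t ht
      have hpos : (0:ℝ) < 2 + a * t := by nlinarith [ht.1]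
      exact ContinuousAt.continuousWithinAt (by fun_prop (disch := positivity))
    · exact measurableSet_Ioc
    · intro t ht
      have hsub : {ω | t < f ω} ⊆ {ω | z ω ≤ -t} := by
        intro ω hω
        simp only [Set.mem_setOf_eq] at hω ⊢
        have h1 : t < max (-z ω) 0 := lt_of_lt_of_le hω (min_le_left _ _)
        have h2 : t < -z ω := by
          rcases max_cases (-z ω) (0:ℝ) with ⟨he, _⟩ | ⟨he, _⟩
          · rwa [he] at h1
          · rw [he] at h1; linarith [ht.1]
        linarith
      calc g t ≤ (μ {ω | z ω ≤ -t}).toReal :=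
            ENNReal.toReal_mono (measure_ne_top μ _) (measure_mono hsub)
        _ ≤ 1 / (2 + a * t) := htail t ht.1.le
  -- compute the integral of 1/(2+at)
  have hcalc : ∫ t in Set.Ioc 0 c, 1 / (2 + a * t) = (1 / a) * Real.log (1 + (a / 2) * c) := by
    rw [← intervalIntegral.integral_of_le hc]
    have hderiv : ∀ t ∈ Set.uIcc (0:ℝ) c,
        HasDerivAt (fun t => (1 / a) * Real.log (2 + a * t)) (1 / (2 + a * t)) t := by
      intro t ht
      rw [Set.uIcc_of_le hc] at ht
      have hpos : (0:ℝ) < 2 + a * t := by nlinarith [ht.1]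
      have h1 : HasDerivAt (fun t : ℝ => 2 + a * t) a t := by
        simpa using ((hasDerivAt_id t).const_mul a).const_add (2:ℝ)
      have h2 := (h1.log hpos.ne').const_mul (1 / a)
      convert h2 using 1
      all_goals try rfl
      field_simp
    rw [intervalIntegral.integral_eq_sub_of_hasDerivAt hderiv]
    · have h2c : (0:ℝ) < 2 + a * c := by nlinarith
      have h1 : (1:ℝ) + (a / 2) * c = (2 + a * c) / 2 := by ring
      rw [h1, Real.log_div h2c.ne' two_ne_zero]
      have h0 : (2:ℝ) + a * 0 = 2 := by ring
      rw [h0]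
      ring
    · apply ContinuousOn.intervalIntegrable
      intro t ht
      rw [Set.uIcc_of_le hc] at ht
      have : (0:ℝ) < 2 + a * t := by nlinarith [ht.1]
      exact ContinuousAt.continuousWithinAt (by fun_prop (disch := positivity))
  -- put everything together
  have hfint : ∫ ω, f ω ∂μ ≤ (1 / a) * Real.log (1 + (a / 2) * c) := by
    rw [hlayer, hsplit] at *
    linarith [hbound, hcalc]
  have hint : ∫ ω, (|z ω + c| - |z ω|) ∂μ = c - 2 * ∫ ω, f ω ∂μ := by
    have : ∀ ω, |z ω + c| - |z ω| = c - 2 * f ω := hkey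
    rw [integral_congr_ae (Filter.Eventually.of_forall this),
      integral_sub (integrable_const c) (hfi.const_mul 2), integral_const,
      integral_const_mul]
    simp
  rw [hint]
  have : (2 / a) * Real.log (1 + (a / 2) * c) = 2 * ((1 / a) * Real.log (1 + (a / 2) * c)) := by
    ring
  linarith [hfint]
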